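/- arXiv:2501.01878 — 6 statements merged into one kernel-verified Lean document; each statement's English description precedes it below -/
import Mathlib

section
/- Under the standing hypotheses, assume in addition 0 < η < e^{σ} and e^{σ} + η < 1. Let n ∈ ℕ and x ∈ B₁ satisfy |P_U G(j+1,x)| ≤ 1 for j = 0,…,n−1. Then G(j,x) ∈ B₁ for j = 0,…,n, and for every t ∈ [0,1]: e^{σ(t+n)}(1 − ηe^{−σ})^{n+1}|P_L x| ≤ |P_L G(t+n,x)| ≤ e^{σ(t+n)}(1 + ηe^{−σ})^{n+1}|P_L x| and e^{u(t+n)}(1 − η)^{n+1}|P_U x| ≤ |P_U G(t+n,x)| ≤ e^{u(t+n)}(1 + η)^{n+1}|P_U x|. -/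
noncomputable section
open Real Set

abbrev R3 := EuclideanSpace ℝ (Fin 3)

/-- Orthogonal projection onto `L = ℝe₁ ⊕ ℝe₂`. -/
def PL (x : R3) : R3 := WithLp.toLp 2 fun i => if (i : ℕ) = 2 then 0 else x i

/-- Orthogonal projection onto `U = ℝe₃`. -/
def PU (x : R3) : R3 := WithLp.toLp 2 fun i => if (i : ℕ) = 2 then x i else 0

/-- The plane `L = ℝe₁ ⊕ ℝe₂`. -/
def Lset : Set R3 := {x | x 2 = 0}

/-- The line `U = ℝe₃`. -/
def Uset : Set R3 := {x | x 0 = 0 ∧ x 1 = 0}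

/-- `B₁ = {x : |P_L x| ≤ 1, |P_U x| ≤ 1}`. -/
def B1 : Set R3 := {x | ‖PL x‖ ≤ 1 ∧ ‖PU x‖ ≤ 1}

/-- The linearized flow `T(t)`. -/
def Tmap (σ μ u t : ℝ) (x : R3) : R3 := WithLp.toLp 2 fun i =>
  if (i : ℕ) = 0 then exp (σ * t) * (cos (μ * t) * x 0 + sin (μ * t) * x 1)
  else if (i : ℕ) = 1 then exp (σ * t) * (-(sin (μ * t)) * x 0 + cos (μ * t) * x 1)
  else exp (u * t) * x 2

/-- A C¹ flow on ℝ³. -/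
def IsC1Flow (G : ℝ → R3 → R3) : Prop :=
  ContDiff ℝ 1 (fun p : ℝ × R3 => G p.1 p.2) ∧ (∀ x, G 0 x = x) ∧
    ∀ s t x, G (t + s) x = G t (G s x)

/-- `M` is invariant under the flow `G` in the set `N`. -/
def InvariantIn (G : ℝ → R3 → R3) (M N : Set R3) : Prop :=
  ∀ x ∈ M ∩ N, ∀ I : Set ℝ, (0 : ℝ) ∈ I → I.OrdConnected →
    (∀ t ∈ I, G t x ∈ N) → ∀ t ∈ I, G t x ∈ M

lemma norm_PL (y : R3) : ‖PL y‖ = Real.sqrt (y 0 ^ 2 + y 1 ^ 2) := by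
  rw [EuclideanSpace.norm_eq]
  simp [Fin.sum_univ_three, PL, sq_abs]

lemma norm_PU (y : R3) : ‖PU y‖ = |y 2| := by
  rw [EuclideanSpace.norm_eq]
  simp [Fin.sum_univ_three, PU, sq_abs, Real.sqrt_sq_eq_abs]

lemma norm_PL_le (y : R3) : ‖PL y‖ ≤ ‖y‖ := by
  rw [norm_PL, EuclideanSpace.norm_eq]
  simp only [Fin.sum_univ_three, Real.norm_eq_abs, sq_abs]
  exact Real.sqrt_le_sqrt (by nlinarith [sq_nonneg (y 2)])

lemma norm_PU_le (y : R3) : ‖PU y‖ ≤ ‖y‖ := by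
  rw [norm_PU, EuclideanSpace.norm_eq]
  simp only [Fin.sum_univ_three, Real.norm_eq_abs, sq_abs]
  rw [← Real.sqrt_sq_eq_abs]
  exact Real.sqrt_le_sqrt (by nlinarith [sq_nonneg (y 0), sq_nonneg (y 1)])

lemma PL_add (a b : R3) : PL (a + b) = PL a + PL b := by
  ext i; show _ = PL a i + PL b i; simp only [PL]; split <;> simp

lemma PL_sub (a b : R3) : PL (a - b) = PL a - PL b := by
  ext i; show _ = PL a i - PL b i; simp only [PL]; split <;> simp

lemma PL_smul (c : ℝ) (a : R3) : PL (c • a) = c • PL a := by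
  ext i; show _ = c * PL a i; simp only [PL]; split <;> simp

lemma PU_add (a b : R3) : PU (a + b) = PU a + PU b := by
  ext i; show _ = PU a i + PU b i; simp only [PU]; split <;> simp

lemma PU_sub (a b : R3) : PU (a - b) = PU a - PU b := by
  ext i; show _ = PU a i - PU b i; simp only [PU]; split <;> simp

lemma PU_smul (c : ℝ) (a : R3) : PU (c • a) = c • PU a := by
  ext i; show _ = c * PU a i; simp only [PU]; split <;> simp

lemma sub_PU (x : R3) : x - PU x = PL x := by
  ext i; show x i - PU x i = PL x i; simp only [PL, PU]; split <;> simp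

lemma sub_PL (x : R3) : x - PL x = PU x := by
  ext i; show x i - PL x i = PU x i; simp only [PL, PU]; split <;> simp

lemma PL_idem (x : R3) : PL (PL x) = PL x := by
  ext i; show _ = PL x i; simp only [PL]; split <;> rfl

lemma PL_apply0 (x : R3) : PL x 0 = x 0 := rfl
lemma norm_PL_Tmap (σ μ u t : ℝ) (y : R3) :
    ‖PL (Tmap σ μ u t y)‖ = exp (σ * t) * ‖PL y‖ := by
  rw [norm_PL, norm_PL]
  have h : Tmap σ μ u t y 0 ^ 2 + Tmap σ μ u t y 1 ^ 2
      = exp (σ * t) ^ 2 * (y 0 ^ 2 + y 1 ^ 2) := by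
    simp only [Tmap]
    norm_num
    nlinarith [sin_sq_add_cos_sq (μ * t)]
  rw [h, Real.sqrt_mul (sq_nonneg _), Real.sqrt_sq (exp_pos _).le]

lemma norm_PU_Tmap (σ μ u t : ℝ) (y : R3) :
    ‖PU (Tmap σ μ u t y)‖ = exp (u * t) * ‖PU y‖ := by
  rw [norm_PU, norm_PU]
  have h : Tmap σ μ u t y 2 = exp (u * t) * y 2 := rfl
  rw [h, abs_mul, abs_of_pos (exp_pos _)]

def TmapLin (σ μ u t : ℝ) : R3 →ₗ[ℝ] R3 where
  toFun := Tmap σ μ u t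
  map_add' a b := by
    ext i; show _ = Tmap σ μ u t a i + Tmap σ μ u t b i
    simp only [Tmap]; split_ifs <;> simp <;> ring
  map_smul' c a := by
    ext i; show _ = c * Tmap σ μ u t a i
    simp only [Tmap]; split_ifs <;> simp <;> ring

def Tlin (σ μ u t : ℝ) : R3 →L[ℝ] R3 := LinearMap.toContinuousLinearMap (TmapLin σ μ u t)

lemma Tlin_apply (σ μ u t : ℝ) (y : R3) : Tlin σ μ u t y = Tmap σ μ u t y := rfl
lemma PU_idem (x : R3) : PU (PU x) = PU x := by
  ext i; show _ = PU x i; simp only [PU]; split <;> rfl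

lemma convex_B1 : Convex ℝ B1 := by
  intro x hx y hy a b ha hb hab
  constructor
  · calc ‖PL (a • x + b • y)‖ = ‖a • PL x + b • PL y‖ := by
          rw [PL_add, PL_smul, PL_smul]
    _ ≤ ‖a • PL x‖ + ‖b • PL y‖ := norm_add_le _ _
    _ = a * ‖PL x‖ + b * ‖PL y‖ := by
          rw [norm_smul, norm_smul, Real.norm_eq_abs, Real.norm_eq_abs,
            abs_of_nonneg ha, abs_of_nonneg hb]
    _ ≤ a * 1 + b * 1 := by
          have := hx.1; have := hy.1
          gcongr
    _ = 1 := by rw [mul_one, mul_one, hab]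
  · calc ‖PU (a • x + b • y)‖ = ‖a • PU x + b • PU y‖ := by
          rw [PU_add, PU_smul, PU_smul]
    _ ≤ ‖a • PU x‖ + ‖b • PU y‖ := norm_add_le _ _
    _ = a * ‖PU x‖ + b * ‖PU y‖ := by
          rw [norm_smul, norm_smul, Real.norm_eq_abs, Real.norm_eq_abs,
            abs_of_nonneg ha, abs_of_nonneg hb]
    _ ≤ a * 1 + b * 1 := by
          have := hx.2; have := hy.2
          gcongr
    _ = 1 := by rw [mul_one, mul_one, hab]

lemma PU_mem_B1 {x : R3} (hx : x ∈ B1) : PU x ∈ B1 := by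
  refine ⟨?_, ?_⟩
  · rw [norm_PL]
    show Real.sqrt ((if ((0:Fin 3):ℕ) = 2 then x 0 else 0) ^ 2 +
      (if ((1:Fin 3):ℕ) = 2 then x 1 else 0) ^ 2) ≤ 1
    norm_num
  · rw [PU_idem]; exact hx.2
lemma PL_mem_B1 {x : R3} (hx : x ∈ B1) : PL x ∈ B1 := by
  refine ⟨?_, ?_⟩
  · rw [PL_idem]; exact hx.1
  · rw [norm_PU]
    show |(if ((2:Fin 3):ℕ) = 2 then 0 else x 2)| ≤ 1
    norm_num
lemma PU_mem_Uset (x : R3) : PU x ∈ Uset := by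
  constructor <;> rfl
lemma PL_mem_Lset (x : R3) : PL x ∈ Lset := rfl
lemma PL_eq_zero_of_Uset {z : R3} (hz : z ∈ Uset) : PL z = 0 := by
  ext i
  show (if (i:ℕ) = 2 then 0 else z i) = 0
  fin_cases i
  · simpa using hz.1
  · simpa using hz.2
  · simp
lemma PU_eq_zero_of_Lset {z : R3} (hz : z ∈ Lset) : PU z = 0 := by
  ext i
  show (if (i:ℕ) = 2 then z i else 0) = 0
  fin_cases i
  · simp
  · simp
  · simpa using (show z 2 = 0 from hz)

section Step
variable {u σ μ η rB : ℝ} {G : ℝ → R3 → R3}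

lemma key_est (hη : 0 ≤ η) (hG : IsC1Flow G)
    (hD2 : ∀ t ∈ Icc (0:ℝ) 1, ∀ x ∈ B1, ∀ y : R3,
      ‖fderiv ℝ (G t) x y - Tmap σ μ u t y‖ ≤ η * ‖y‖)
    {t : ℝ} (ht : t ∈ Icc (0:ℝ) 1) {x z : R3} (hx : x ∈ B1) (hz : z ∈ B1) :
    ‖G t x - G t z - Tlin σ μ u t (x - z)‖ ≤ η * ‖x - z‖ := by
  have hc1 : ContDiff ℝ 1 (G t) :=
    hG.1.comp ((contDiff_const (c := t)).prodMk contDiff_id)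
  have hders : ∀ w ∈ B1, HasFDerivWithinAt (G t) (fderiv ℝ (G t) w) B1 w := fun w _ =>
    ((hc1.differentiable one_ne_zero) w).hasFDerivAt.hasFDerivWithinAt
  have hbound : ∀ w ∈ B1, ‖fderiv ℝ (G t) w - Tlin σ μ u t‖ ≤ η := by
    intro w hw
    refine ContinuousLinearMap.opNorm_le_bound _ hη (fun y => ?_)
    rw [ContinuousLinearMap.sub_apply, Tlin_apply]
    exact hD2 t ht w hw y
  exact Convex.norm_image_sub_le_of_norm_hasFDerivWithin_le' hders hbound convex_B1 hz hx

lemma inv_apply_G {M : Set R3} (hB1B : B1 ⊆ Metric.closedBall (0 : R3) rB)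
    (hGB : ∀ t ∈ Icc (0:ℝ) 1, ∀ x ∈ B1, G t x ∈ Metric.closedBall (0 : R3) rB)
    (hMinv : InvariantIn G M (Metric.closedBall 0 rB))
    {t : ℝ} (ht : t ∈ Icc (0:ℝ) 1) {z : R3} (hzM : z ∈ M) (hzB : z ∈ B1) :
    G t z ∈ M :=
  hMinv z ⟨hzM, hB1B hzB⟩ (Icc 0 1) ⟨le_rfl, zero_le_one⟩ ordConnected_Icc
    (fun s hs => hGB s hs z hzB) t ht

lemma stepL (hσ : σ < 0) (hη : 0 < η)
    (hB1B : B1 ⊆ Metric.closedBall (0 : R3) rB) (hG : IsC1Flow G)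
    (hD2 : ∀ t ∈ Icc (0:ℝ) 1, ∀ x ∈ B1, ∀ y : R3,
      ‖fderiv ℝ (G t) x y - Tmap σ μ u t y‖ ≤ η * ‖y‖)
    (hGB : ∀ t ∈ Icc (0:ℝ) 1, ∀ x ∈ B1, G t x ∈ Metric.closedBall (0 : R3) rB)
    (hUinv : InvariantIn G Uset (Metric.closedBall 0 rB))
    {t : ℝ} (ht : t ∈ Icc (0:ℝ) 1) {x : R3} (hx : x ∈ B1) :
    exp (σ * t) * (1 - η * exp (-σ)) * ‖PL x‖ ≤ ‖PL (G t x)‖ ∧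
      ‖PL (G t x)‖ ≤ exp (σ * t) * (1 + η * exp (-σ)) * ‖PL x‖ := by
  have hkey := key_est hη.le hG hD2 ht hx (PU_mem_B1 hx)
  rw [sub_PU] at hkey
  have hzero : PL (G t (PU x)) = 0 :=
    PL_eq_zero_of_Uset (inv_apply_G hB1B hGB hUinv ht (PU_mem_Uset x) (PU_mem_B1 hx))
  have h1 : ‖PL (G t x) - PL (Tlin σ μ u t (PL x))‖ ≤ η * ‖PL x‖ := by
    calc ‖PL (G t x) - PL (Tlin σ μ u t (PL x))‖
        = ‖PL (G t x - G t (PU x) - Tlin σ μ u t (PL x))‖ := by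
          rw [PL_sub, PL_sub, hzero, sub_zero]
    _ ≤ ‖G t x - G t (PU x) - Tlin σ μ u t (PL x)‖ := norm_PL_le _
    _ ≤ η * ‖PL x‖ := hkey
  have h2 : ‖PL (Tlin σ μ u t (PL x))‖ = exp (σ * t) * ‖PL x‖ := by
    rw [Tlin_apply, norm_PL_Tmap, PL_idem]
  have habs : |‖PL (G t x)‖ - exp (σ * t) * ‖PL x‖| ≤ η * ‖PL x‖ := by
    rw [← h2]
    exact (abs_norm_sub_norm_le _ _).trans h1
  have hexp : (1:ℝ) ≤ exp (σ * t) * exp (-σ) := by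
    rw [← Real.exp_add]
    apply Real.one_le_exp
    nlinarith [ht.1, ht.2]
  have hPLnn : (0:ℝ) ≤ ‖PL x‖ := norm_nonneg _
  obtain ⟨ha, hb⟩ := abs_le.mp habs
  constructor
  · nlinarith [mul_nonneg (mul_nonneg hη.le hPLnn) (sub_nonneg.mpr hexp)]
  · nlinarith [mul_nonneg (mul_nonneg hη.le hPLnn) (sub_nonneg.mpr hexp)]

lemma stepU (hu : 0 < u) (hη : 0 < η)
    (hB1B : B1 ⊆ Metric.closedBall (0 : R3) rB) (hG : IsC1Flow G)
    (hD2 : ∀ t ∈ Icc (0:ℝ) 1, ∀ x ∈ B1, ∀ y : R3,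
      ‖fderiv ℝ (G t) x y - Tmap σ μ u t y‖ ≤ η * ‖y‖)
    (hGB : ∀ t ∈ Icc (0:ℝ) 1, ∀ x ∈ B1, G t x ∈ Metric.closedBall (0 : R3) rB)
    (hLinv : InvariantIn G Lset (Metric.closedBall 0 rB))
    {t : ℝ} (ht : t ∈ Icc (0:ℝ) 1) {x : R3} (hx : x ∈ B1) :
    exp (u * t) * (1 - η) * ‖PU x‖ ≤ ‖PU (G t x)‖ ∧
      ‖PU (G t x)‖ ≤ exp (u * t) * (1 + η) * ‖PU x‖ := by
  have hkey := key_est hη.le hG hD2 ht hx (PL_mem_B1 hx)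
  rw [sub_PL] at hkey
  have hzero : PU (G t (PL x)) = 0 :=
    PU_eq_zero_of_Lset (inv_apply_G hB1B hGB hLinv ht (PL_mem_Lset x) (PL_mem_B1 hx))
  have h1 : ‖PU (G t x) - PU (Tlin σ μ u t (PU x))‖ ≤ η * ‖PU x‖ := by
    calc ‖PU (G t x) - PU (Tlin σ μ u t (PU x))‖
        = ‖PU (G t x - G t (PL x) - Tlin σ μ u t (PU x))‖ := by
          rw [PU_sub, PU_sub, hzero, sub_zero]
    _ ≤ ‖G t x - G t (PL x) - Tlin σ μ u t (PU x)‖ := norm_PU_le _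
    _ ≤ η * ‖PU x‖ := hkey
  have h2 : ‖PU (Tlin σ μ u t (PU x))‖ = exp (u * t) * ‖PU x‖ := by
    rw [Tlin_apply, norm_PU_Tmap, PU_idem]
  have habs : |‖PU (G t x)‖ - exp (u * t) * ‖PU x‖| ≤ η * ‖PU x‖ := by
    rw [← h2]
    exact (abs_norm_sub_norm_le _ _).trans h1
  have hexp : (1:ℝ) ≤ exp (u * t) := Real.one_le_exp (mul_nonneg hu.le ht.1)
  have hPUnn : (0:ℝ) ≤ ‖PU x‖ := norm_nonneg _
  obtain ⟨ha, hb⟩ := abs_le.mp habs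
  constructor
  · nlinarith [mul_nonneg (mul_nonneg hη.le hPUnn) (sub_nonneg.mpr hexp)]
  · nlinarith [mul_nonneg (mul_nonneg hη.le hPUnn) (sub_nonneg.mpr hexp)]
end Step


theorem statement2
    (u σ μ η rB : ℝ) (hu : 0 < u) (hσ : σ < 0) (hμ : 0 < μ) (hη : 0 < η)
    (hB1B : B1 ⊆ Metric.closedBall (0 : R3) rB)
    (G : ℝ → R3 → R3) (hG : IsC1Flow G) (hG0 : ∀ t : ℝ, G t 0 = 0)
    (hD2 : ∀ t ∈ Icc (0:ℝ) 1, ∀ x ∈ B1, ∀ y : R3,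
      ‖fderiv ℝ (G t) x y - Tmap σ μ u t y‖ ≤ η * ‖y‖)
    (hGB : ∀ t ∈ Icc (0:ℝ) 1, ∀ x ∈ B1, G t x ∈ Metric.closedBall (0 : R3) rB)
    (hLinv : InvariantIn G Lset (Metric.closedBall 0 rB))
    (hUinv : InvariantIn G Uset (Metric.closedBall 0 rB))
    (hησ : η < exp σ) (hησ1 : exp σ + η < 1)
    (n : ℕ) (x : R3) (hx : x ∈ B1)
    (hPU : ∀ j : ℕ, j < n → ‖PU (G ((j : ℝ) + 1) x)‖ ≤ 1) :
    (∀ j : ℕ, j ≤ n → G (j : ℝ) x ∈ B1) ∧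
    ∀ t ∈ Icc (0:ℝ) 1,
      exp (σ * (t + n)) * (1 - η * exp (-σ)) ^ (n + 1) * ‖PL x‖ ≤ ‖PL (G (t + n) x)‖ ∧
      ‖PL (G (t + n) x)‖ ≤ exp (σ * (t + n)) * (1 + η * exp (-σ)) ^ (n + 1) * ‖PL x‖ ∧
      exp (u * (t + n)) * (1 - η) ^ (n + 1) * ‖PU x‖ ≤ ‖PU (G (t + n) x)‖ ∧
      ‖PU (G (t + n) x)‖ ≤ exp (u * (t + n)) * (1 + η) ^ (n + 1) * ‖PU x‖ := by
  have hexpσ : Real.exp σ * Real.exp (-σ) = 1 := by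
    rw [← Real.exp_add, add_neg_cancel, Real.exp_zero]
  have hc1 : η * Real.exp (-σ) < 1 := by
    have := mul_lt_mul_of_pos_right hησ (Real.exp_pos (-σ))
    linarith
  have hc0 : 0 ≤ η * Real.exp (-σ) := by positivity
  have hη1 : η < 1 := by nlinarith [Real.exp_pos σ]
  have hec : Real.exp σ * (1 + η * Real.exp (-σ)) = Real.exp σ + η := by
    have : Real.exp σ * (η * Real.exp (-σ)) = η := by
      rw [mul_comm η, ← mul_assoc, hexpσ, one_mul]
    linarith [this, mul_one (Real.exp σ)]
  have AL0 : 0 ≤ Real.exp σ * (1 - η * Real.exp (-σ)) :=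
    mul_nonneg (Real.exp_pos σ).le (by linarith)
  have BL0 : 0 ≤ Real.exp σ * (1 + η * Real.exp (-σ)) :=
    mul_nonneg (Real.exp_pos σ).le (by linarith)
  have AU0 : 0 ≤ Real.exp u * (1 - η) := mul_nonneg (Real.exp_pos u).le (by linarith)
  have BU0 : 0 ≤ Real.exp u * (1 + η) := mul_nonneg (Real.exp_pos u).le (by linarith)
  have h1mem : (1:ℝ) ∈ Icc (0:ℝ) 1 := ⟨zero_le_one, le_rfl⟩
  have key : ∀ j : ℕ, j ≤ n → G (j : ℝ) x ∈ B1 ∧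
      (Real.exp σ * (1 - η * Real.exp (-σ))) ^ j * ‖PL x‖ ≤ ‖PL (G (j : ℝ) x)‖ ∧
      ‖PL (G (j : ℝ) x)‖ ≤ (Real.exp σ * (1 + η * Real.exp (-σ))) ^ j * ‖PL x‖ ∧
      (Real.exp u * (1 - η)) ^ j * ‖PU x‖ ≤ ‖PU (G (j : ℝ) x)‖ ∧
      ‖PU (G (j : ℝ) x)‖ ≤ (Real.exp u * (1 + η)) ^ j * ‖PU x‖ := by
    intro j
    induction j with
    | zero =>
      intro _
      simp only [Nat.cast_zero, hG.2.1, pow_zero, one_mul]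
      exact ⟨hx, le_rfl, le_rfl, le_rfl, le_rfl⟩
    | succ j ih =>
      intro hjn
      obtain ⟨hB, hL1, hL2, hU1, hU2⟩ := ih (le_trans (Nat.le_succ j) hjn)
      have hflow : G ((j + 1 : ℕ) : ℝ) x = G 1 (G (j : ℝ) x) := by
        push_cast
        rw [add_comm]
        exact hG.2.2 (j : ℝ) 1 x
      have sL := stepL hσ hη hB1B hG hD2 hGB hUinv h1mem hB
      have sU := stepU hu hη hB1B hG hD2 hGB hLinv h1mem hB
      rw [mul_one] at sL sU
      rw [hflow]
      have hPLj : ‖PL (G (j:ℝ) x)‖ ≤ 1 := hB.1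
      have hmemL : ‖PL (G 1 (G (j:ℝ) x))‖ ≤ 1 := by
        calc ‖PL (G 1 (G (j:ℝ) x))‖ ≤ Real.exp σ * (1 + η * Real.exp (-σ)) * ‖PL (G (j:ℝ) x)‖ :=
              sL.2
        _ = (Real.exp σ + η) * ‖PL (G (j:ℝ) x)‖ := by rw [hec]
        _ ≤ 1 * 1 := by
              apply mul_le_mul (by linarith) hPLj (norm_nonneg _) zero_le_one
        _ = 1 := one_mul 1
      have hmemU : ‖PU (G 1 (G (j:ℝ) x))‖ ≤ 1 := by
        have := hPU j (by omega)
        rw [← hflow]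
        have hcast : ((j + 1 : ℕ) : ℝ) = (j : ℝ) + 1 := by push_cast; ring
        rwa [hcast]
      refine ⟨⟨hmemL, hmemU⟩, ?_, ?_, ?_, ?_⟩
      · calc (Real.exp σ * (1 - η * Real.exp (-σ))) ^ (j + 1) * ‖PL x‖
            = Real.exp σ * (1 - η * Real.exp (-σ)) *
              ((Real.exp σ * (1 - η * Real.exp (-σ))) ^ j * ‖PL x‖) := by ring
        _ ≤ Real.exp σ * (1 - η * Real.exp (-σ)) * ‖PL (G (j:ℝ) x)‖ :=
              mul_le_mul_of_nonneg_left hL1 AL0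
        _ ≤ ‖PL (G 1 (G (j:ℝ) x))‖ := sL.1
      · calc ‖PL (G 1 (G (j:ℝ) x))‖
            ≤ Real.exp σ * (1 + η * Real.exp (-σ)) * ‖PL (G (j:ℝ) x)‖ := sL.2
        _ ≤ Real.exp σ * (1 + η * Real.exp (-σ)) *
              ((Real.exp σ * (1 + η * Real.exp (-σ))) ^ j * ‖PL x‖) :=
              mul_le_mul_of_nonneg_left hL2 BL0
        _ = (Real.exp σ * (1 + η * Real.exp (-σ))) ^ (j + 1) * ‖PL x‖ := by ring
      · calc (Real.exp u * (1 - η)) ^ (j + 1) * ‖PU x‖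
            = Real.exp u * (1 - η) * ((Real.exp u * (1 - η)) ^ j * ‖PU x‖) := by ring
        _ ≤ Real.exp u * (1 - η) * ‖PU (G (j:ℝ) x)‖ := mul_le_mul_of_nonneg_left hU1 AU0
        _ ≤ ‖PU (G 1 (G (j:ℝ) x))‖ := sU.1
      · calc ‖PU (G 1 (G (j:ℝ) x))‖
            ≤ Real.exp u * (1 + η) * ‖PU (G (j:ℝ) x)‖ := sU.2
        _ ≤ Real.exp u * (1 + η) * ((Real.exp u * (1 + η)) ^ j * ‖PU x‖) :=
              mul_le_mul_of_nonneg_left hU2 BU0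
        _ = (Real.exp u * (1 + η)) ^ (j + 1) * ‖PU x‖ := by ring
  refine ⟨fun j hj => (key j hj).1, ?_⟩
  intro t ht
  obtain ⟨hBn, hL1, hL2, hU1, hU2⟩ := key n le_rfl
  have sL := stepL hσ hη hB1B hG hD2 hGB hUinv ht hBn
  have sU := stepU hu hη hB1B hG hD2 hGB hLinv ht hBn
  have hflow : G (t + (n:ℝ)) x = G t (G (n:ℝ) x) := hG.2.2 (n:ℝ) t x
  have hσsplit : Real.exp (σ * (t + n)) = Real.exp (σ * t) * Real.exp σ ^ n := by
    rw [mul_add, Real.exp_add, mul_comm σ (n:ℝ), Real.exp_nat_mul]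
  have husplit : Real.exp (u * (t + n)) = Real.exp (u * t) * Real.exp u ^ n := by
    rw [mul_add, Real.exp_add, mul_comm u (n:ℝ), Real.exp_nat_mul]
  have eσt0 : (0:ℝ) ≤ Real.exp (σ * t) * (1 - η * Real.exp (-σ)) :=
    mul_nonneg (Real.exp_pos _).le (by linarith)
  have eσt0' : (0:ℝ) ≤ Real.exp (σ * t) * (1 + η * Real.exp (-σ)) :=
    mul_nonneg (Real.exp_pos _).le (by linarith)
  have eut0 : (0:ℝ) ≤ Real.exp (u * t) * (1 - η) :=
    mul_nonneg (Real.exp_pos _).le (by linarith)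
  have eut0' : (0:ℝ) ≤ Real.exp (u * t) * (1 + η) :=
    mul_nonneg (Real.exp_pos _).le (by linarith)
  rw [hflow]
  refine ⟨?_, ?_, ?_, ?_⟩
  · calc Real.exp (σ * (t + n)) * (1 - η * Real.exp (-σ)) ^ (n + 1) * ‖PL x‖
        = Real.exp (σ * t) * (1 - η * Real.exp (-σ)) *
          ((Real.exp σ * (1 - η * Real.exp (-σ))) ^ n * ‖PL x‖) := by
          rw [hσsplit, mul_pow]; ring
    _ ≤ Real.exp (σ * t) * (1 - η * Real.exp (-σ)) * ‖PL (G (n:ℝ) x)‖ :=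
          mul_le_mul_of_nonneg_left hL1 eσt0
    _ ≤ ‖PL (G t (G (n:ℝ) x))‖ := sL.1
  · calc ‖PL (G t (G (n:ℝ) x))‖
        ≤ Real.exp (σ * t) * (1 + η * Real.exp (-σ)) * ‖PL (G (n:ℝ) x)‖ := sL.2
    _ ≤ Real.exp (σ * t) * (1 + η * Real.exp (-σ)) *
          ((Real.exp σ * (1 + η * Real.exp (-σ))) ^ n * ‖PL x‖) :=
          mul_le_mul_of_nonneg_left hL2 eσt0'
    _ = Real.exp (σ * (t + n)) * (1 + η * Real.exp (-σ)) ^ (n + 1) * ‖PL x‖ := by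
          rw [hσsplit, mul_pow]; ring
  · calc Real.exp (u * (t + n)) * (1 - η) ^ (n + 1) * ‖PU x‖
        = Real.exp (u * t) * (1 - η) * ((Real.exp u * (1 - η)) ^ n * ‖PU x‖) := by
          rw [husplit, mul_pow]; ring
    _ ≤ Real.exp (u * t) * (1 - η) * ‖PU (G (n:ℝ) x)‖ :=
          mul_le_mul_of_nonneg_left hU1 eut0
    _ ≤ ‖PU (G t (G (n:ℝ) x))‖ := sU.1
  · calc ‖PU (G t (G (n:ℝ) x))‖
        ≤ Real.exp (u * t) * (1 + η) * ‖PU (G (n:ℝ) x)‖ := sU.2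
    _ ≤ Real.exp (u * t) * (1 + η) * ((Real.exp u * (1 + η)) ^ n * ‖PU x‖) :=
          mul_le_mul_of_nonneg_left hU2 eut0'
    _ = Real.exp (u * (t + n)) * (1 + η) ^ (n + 1) * ‖PU x‖ := by
          rw [husplit, mul_pow]; ring
end
end

section
/- Let F be a C¹ flow on ℝ³ and h : ℝ → ℝ³ a continuously differentiable flowline of F (h(t+s) = F(t,h(s)) for all s,t) with h(t) ≠ 0 and h'(t) ≠ 0 for all t and h(t) → 0 as |t| → ∞, and suppose there are reals t_U < t_L with h(t) ∈ (0,∞)e₃ for all t ≤ t_U and h(t) ∈ L for all t ≥ t_L. For ε > 0 set h_ε = (1/ε)h. Then: (i) for every ε ∈ (0, |h(t_U)|) there exists t_{E,ε} ≤ t_U with h_ε(t_{E,ε}) = e₃ and h_ε(t) ∈ (0,∞)e₃ for all t ≤ t_{E,ε}; (ii) there exist a strictly increasing sequence (t_{I,j})_{j∈ℕ} in [t_L, ∞) with t_{I,j} → ∞ and a strictly decreasing sequence (ε_j)_{j∈ℕ} in (0,∞) with ε_j → 0 such that for every j ∈ ℕ: ε_j < |h(t_U)|, |h_{ε_j}(t_{I,j})|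 = 1, the derivative of t ↦ |h_{ε_j}(t)|² at t_{I,j} is negative, h_{ε_j}(t) ∈ L for all t ≥ t_{I,j}, and h_{ε_j}'(t_{I,j}) ∈ L. -/
noncomputable section
open Real Set

open Filter

/-- The third basis vector `e₃`. -/
def e3 : R3 := WithLp.toLp 2 fun i => if (i : ℕ) = 2 then 1 else 0

/-- The open positive ray `(0,∞)e₃`. -/
def posRay : Set R3 := {x | x 0 = 0 ∧ x 1 = 0 ∧ 0 < x 2}

theorem statement6
    (F : ℝ → R3 → R3) (hF : IsC1Flow F)
    (h : ℝ → R3) (hhC1 : ContDiff ℝ 1 h)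
    (hflowline : ∀ s t : ℝ, h (t + s) = F t (h s))
    (hne : ∀ t : ℝ, h t ≠ 0) (hne' : ∀ t : ℝ, deriv h t ≠ 0)
    (hlim : Tendsto h (cocompact ℝ) (nhds 0))
    (tU tL : ℝ) (htUL : tU < tL)
    (hU : ∀ t ≤ tU, h t ∈ posRay)
    (hL : ∀ t ≥ tL, h t ∈ Lset) :
    (∀ ε ∈ Ioo (0 : ℝ) ‖h tU‖, ∃ tE ≤ tU,
      ε⁻¹ • h tE = e3 ∧ ∀ t ≤ tE, ε⁻¹ • h t ∈ posRay) ∧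
    (∃ tI : ℕ → ℝ, ∃ εs : ℕ → ℝ,
      StrictMono tI ∧ (∀ j, tL ≤ tI j) ∧ Tendsto tI atTop atTop ∧
      StrictAnti εs ∧ (∀ j, 0 < εs j) ∧ Tendsto εs atTop (nhds 0) ∧
      ∀ j : ℕ,
        εs j < ‖h tU‖ ∧
        ‖(εs j)⁻¹ • h (tI j)‖ = 1 ∧
        deriv (fun t => ‖(εs j)⁻¹ • h t‖ ^ 2) (tI j) < 0 ∧
        (∀ t ≥ tI j, (εs j)⁻¹ • h t ∈ Lset) ∧
        deriv (fun t => (εs j)⁻¹ • h t) (tI j) ∈ Lset) := by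
  have hd : Differentiable ℝ h := hhC1.differentiable one_ne_zero
  set φ : ℝ → ℝ := fun t => ‖h t‖ ^ 2 with hφdef
  have hφd : Differentiable ℝ φ := hd.norm_sq (𝕜 := ℝ)
  have hφc : Continuous φ := hφd.continuous
  have hφpos : ∀ t, 0 < φ t := fun t => pow_pos (norm_pos_iff.mpr (hne t)) 2
  have hnormU : ∀ t, t ≤ tU → ‖h t‖ = h t 2 := by
    intro t ht
    obtain ⟨h0, h1, h2⟩ := hU t ht
    rw [EuclideanSpace.norm_eq, Fin.sum_univ_three, h0, h1]
    simp only [norm_zero, Real.norm_eq_abs, sq_abs, ne_eq, OfNat.ofNat_ne_zero,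
      not_false_eq_true, zero_pow, zero_add]
    exact Real.sqrt_sq h2.le
  constructor
  · -- Part (i)
    have hbot : Tendsto h atBot (nhds 0) :=
      hlim.mono_left (by rw [cocompact_eq_atBot_atTop]; exact le_sup_left)
    have hnbot : Tendsto (fun t => ‖h t‖) atBot (nhds 0) := by
      simpa [Function.comp_def] using (continuous_norm.tendsto (0 : R3)).comp hbot
    rintro ε ⟨hε0, hεU⟩
    obtain ⟨t0, ht0ε, ht0U⟩ :=
      ((hnbot.eventually_lt_const hε0).and (eventually_lt_atBot tU)).exists
    obtain ⟨tE, htEmem, htEval⟩ :=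
      intermediate_value_Icc ht0U.le (continuous_norm.comp hd.continuous).continuousOn
        ⟨ht0ε.le, hεU.le⟩
    refine ⟨tE, htEmem.2, ?_, ?_⟩
    · obtain ⟨h0, h1, h2⟩ := hU tE htEmem.2
      have h2eq : h tE 2 = ε := by rw [← hnormU tE htEmem.2]; exact htEval
      ext i
      fin_cases i <;>
        simp [e3, PiLp.smul_apply, smul_eq_mul, h0, h1, h2eq,
          inv_mul_cancel₀ (ne_of_gt hε0)]
    · intro t ht
      obtain ⟨h0, h1, h2⟩ := hU t (ht.trans htEmem.2)
      refine ⟨?_, ?_, ?_⟩ <;>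
        simp [PiLp.smul_apply, smul_eq_mul, h0, h1, mul_pos (inv_pos.mpr hε0) h2]
  · -- Part (ii)
    have htop : Tendsto h atTop (nhds 0) :=
      hlim.mono_left (by rw [cocompact_eq_atBot_atTop]; exact le_sup_right)
    have hφtop : Tendsto φ atTop (nhds 0) := by
      have hc : Continuous fun x : R3 => ‖x‖ ^ 2 := continuous_norm.pow 2
      simpa [Function.comp_def] using (hc.tendsto (0 : R3)).comp htop
    have key : ∀ T b : ℝ, 0 < b → ∃ t, T < t ∧ deriv φ t < 0 ∧ φ t < b := by
      intro T b hb
      obtain ⟨t₁, ht₁b, ht₁T⟩ :=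
        ((hφtop.eventually_lt_const hb).and (eventually_gt_atTop T)).exists
      have ha : 0 < φ t₁ := hφpos t₁
      obtain ⟨T₂, hT₂⟩ := eventually_atTop.mp (hφtop.eventually_lt_const ha)
      have hKcl : IsClosed {t : ℝ | t₁ ≤ t ∧ φ t₁ ≤ φ t} :=
        (isClosed_le continuous_const continuous_id).inter
          (isClosed_le continuous_const hφc)
      have hKsub : {t : ℝ | t₁ ≤ t ∧ φ t₁ ≤ φ t} ⊆ Icc t₁ T₂ := by
        rintro t ⟨ht₁, hta⟩
        refine ⟨ht₁, ?_⟩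
        by_contra hc
        push_neg at hc
        exact absurd (hT₂ t hc.le) (not_lt.mpr hta)
      have hKcp : IsCompact {t : ℝ | t₁ ≤ t ∧ φ t₁ ≤ φ t} :=
        isCompact_Icc.of_isClosed_subset hKcl hKsub
      have hKne : {t : ℝ | t₁ ≤ t ∧ φ t₁ ≤ φ t}.Nonempty := ⟨t₁, le_refl _, le_refl _⟩
      obtain ⟨hc1, hc2⟩ := hKcp.sSup_mem hKne
      set c := sSup {t : ℝ | t₁ ≤ t ∧ φ t₁ ≤ φ t} with hcdef
      have hlt : ∀ t, c < t → φ t < φ t₁ := by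
        intro t htc
        by_contra hcon
        push_neg at hcon
        exact absurd (le_csSup hKcp.bddAbove ⟨hc1.trans htc.le, hcon⟩)
          (not_le.mpr htc)
      obtain ⟨s, hsmem, hs⟩ := exists_deriv_eq_slope φ (by linarith : c < c + 1)
        hφc.continuousOn hφd.differentiableOn
      refine ⟨s, by linarith [hsmem.1, hc1, ht₁T], ?_, lt_trans (hlt s hsmem.1) ht₁b⟩
      rw [hs]
      have h1 := hlt (c + 1) (by linarith)
      have heq : (c : ℝ) + 1 - c = 1 := by ring
      rw [heq, div_one]
      linarith
    have key2 : ∀ (x : ℝ) (j : ℕ), ∃ t, max x ((j : ℝ) + 1) < t ∧ deriv φ t < 0 ∧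
        φ t < min (φ x) (1 / ((j : ℝ) + 2)) := fun x j =>
      key _ _ (lt_min (hφpos x) (by positivity))
    choose g hg1 hg2 hg3 using key2
    have hbU : (0 : ℝ) < min (φ tU) 1 := lt_min (hφpos tU) one_pos
    obtain ⟨t0, ht0T, ht0d, ht0b⟩ := key tL _ hbU
    set tI : ℕ → ℝ := fun n => Nat.rec t0 (fun j tj => g tj j) n with htIdef
    have htIs : ∀ j, tI (j + 1) = g (tI j) j := fun j => rfl
    have hstep : ∀ j : ℕ, max (tI j) ((j : ℝ) + 1) < tI (j + 1) := fun j => by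
      rw [htIs]; exact hg1 _ j
    have hmono : StrictMono tI :=
      strictMono_nat_of_lt_succ fun j => lt_of_le_of_lt (le_max_left _ _) (hstep j)
    have hφdec : ∀ j, φ (tI (j + 1)) < φ (tI j) := fun j => by
      have := hg3 (tI j) j
      rw [← htIs j] at this
      exact lt_of_lt_of_le this (min_le_left _ _)
    have hφsmall : ∀ j : ℕ, φ (tI (j + 1)) < 1 / ((j : ℝ) + 2) := fun j => by
      have := hg3 (tI j) j
      rw [← htIs j] at this
      exact lt_of_lt_of_le this (min_le_right _ _)
    have hφb0 : ∀ j, φ (tI j) < min (φ tU) 1 := by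
      intro j
      induction j with
      | zero => exact ht0b
      | succ n ih => exact lt_trans (hφdec n) ih
    have htLlt : ∀ j, tL < tI j := by
      intro j
      induction j with
      | zero => exact ht0T
      | succ n ih => exact lt_trans ih (lt_of_le_of_lt (le_max_left _ _) (hstep n))
    have hderivneg : ∀ j, deriv φ (tI j) < 0 := by
      intro j
      cases j with
      | zero => exact ht0d
      | succ n => rw [htIs]; exact hg2 _ n
    have htItop : Tendsto tI atTop atTop := by
      apply tendsto_atTop_mono' atTop (eventually_atTop.mpr ⟨1, ?_⟩)
        tendsto_natCast_atTop_atTop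
      intro j hj
      obtain ⟨n, rfl⟩ := Nat.exists_eq_add_of_le hj
      rw [Nat.add_comm]
      have := lt_of_le_of_lt (le_max_right (tI n) ((n : ℝ) + 1)) (hstep n)
      push_cast
      linarith
    set εs : ℕ → ℝ := fun j => ‖h (tI j)‖ with hεsdef
    have hεpos : ∀ j, 0 < εs j := fun j => norm_pos_iff.mpr (hne _)
    have hεanti : StrictAnti εs := by
      apply strictAnti_nat_of_succ_lt
      intro j
      have := hφdec j
      exact (pow_lt_pow_iff_left₀ (norm_nonneg _) (norm_nonneg _) two_ne_zero).mp this
    have hφseq : Tendsto (fun j => φ (tI j)) atTop (nhds 0) := by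
      apply tendsto_of_tendsto_of_tendsto_of_le_of_le tendsto_const_nhds
        tendsto_one_div_add_atTop_nhds_zero_nat (fun j => (hφpos _).le) ?_
      intro j
      cases j with
      | zero =>
        simpa using (show φ (tI 0) ≤ 1 from (lt_of_lt_of_le ht0b (min_le_right _ _)).le)
      | succ n =>
        have := hφsmall n
        push_cast
        push_cast at this
        have e : ((n : ℝ) + 1 + 1) = (n : ℝ) + 2 := by ring
        rw [e]
        linarith
    have hεs0 : Tendsto εs atTop (nhds 0) := by
      have hsq : εs = fun j => Real.sqrt (φ (tI j)) :=
        funext fun j => (Real.sqrt_sq (norm_nonneg _)).symm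
      rw [hsq]
      simpa [Function.comp_def] using (Real.continuous_sqrt.tendsto' 0 0 Real.sqrt_zero).comp hφseq
    have hεU' : ∀ j, εs j < ‖h tU‖ := fun j => by
      have := lt_of_lt_of_le (hφb0 j) (min_le_left _ _)
      exact (pow_lt_pow_iff_left₀ (norm_nonneg _) (norm_nonneg _) two_ne_zero).mp this
    refine ⟨tI, εs, hmono, fun j => (htLlt j).le, htItop, hεanti, hεpos, hεs0, ?_⟩
    intro j
    refine ⟨hεU' j, ?_, ?_, ?_, ?_⟩
    · rw [norm_smul, Real.norm_eq_abs, abs_inv, abs_of_pos (hεpos j)]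
      exact inv_mul_cancel₀ (hεpos j).ne'
    · have hfeq : (fun t => ‖(εs j)⁻¹ • h t‖ ^ 2) = fun t => ((εs j)⁻¹) ^ 2 * φ t := by
        funext t
        rw [hφdef, norm_smul, mul_pow, Real.norm_eq_abs, sq_abs]
      rw [hfeq, deriv_const_mul_field]
      exact mul_neg_of_pos_of_neg (pow_pos (inv_pos.mpr (hεpos j)) 2) (hderivneg j)
    · intro t ht
      have h2 : h t 2 = 0 := hL t ((htLlt j).le.trans ht)
      show ((εs j)⁻¹ • h t) 2 = 0
      simp [PiLp.smul_apply, smul_eq_mul, h2]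
    · have hdsm : deriv (fun t => (εs j)⁻¹ • h t) (tI j) = (εs j)⁻¹ • deriv h (tI j) :=
        (((hd (tI j)).hasDerivAt).const_smul (εs j)⁻¹).deriv
      rw [hdsm]
      have hv2 : deriv h (tI j) 2 = 0 := by
        have hhd : HasDerivAt h (deriv h (tI j)) (tI j) := (hd (tI j)).hasDerivAt
        have hp : HasDerivAt (⇑(EuclideanSpace.proj (2 : Fin 3)) ∘ h)
            ((EuclideanSpace.proj (2 : Fin 3)) (deriv h (tI j))) (tI j) :=
          (EuclideanSpace.proj (2 : Fin 3)).hasFDerivAt.comp_hasDerivAt _ hhd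
        have hev : (⇑(EuclideanSpace.proj (2 : Fin 3)) ∘ h) =ᶠ[nhds (tI j)]
            fun _ => (0 : ℝ) := by
          filter_upwards [Ioi_mem_nhds (htLlt j)] with s hs
          have hLs := hL s hs.le
          simp only [Lset, Set.mem_setOf_eq] at hLs
          simpa using hLs
        have hz : HasDerivAt (⇑(EuclideanSpace.proj (2 : Fin 3)) ∘ h) 0 (tI j) :=
          (hasDerivAt_const (tI j) (0 : ℝ)).congr_of_eventuallyEq hev
        simpa using hp.unique hz
      show ((εs j)⁻¹ • deriv h (tI j)) 2 = 0
      simp [PiLp.smul_apply, smul_eq_mul, hv2]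
end
end

section
/- Let u, μ, η̃ be reals with u > 0, μ > 0 and 0 < η̃ < min{u, μ}. Set c = ((u+η̃)(μ+η̃))/((u−η̃)(μ−η̃)) and k = e^{−6π(u+η̃)/(μ−η̃)}. Let Δ₂ ∈ (0,1) and Δ₁ = k·Δ₂^{c}. Then c > 1, k < 1 and Δ₁ < Δ₂; and if ψ, γ ∈ (−π, π) and φ₂, φ₁ are reals satisfying φ₂ − ψ ≥ ((μ+η̃)/(u−η̃))·log Δ₂ and φ₁ − γ ≤ ((μ−η̃)/(u+η̃))·log Δ₁, then φ₂ − φ₁ ≥ 4π. -/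
noncomputable section
open Real

theorem statement14
    (u μ ηt : ℝ) (hu : 0 < u) (hμ : 0 < μ)
    (hηt0 : 0 < ηt) (hηt : ηt < min u μ)
    (c k : ℝ)
    (hc : c = (u + ηt) * (μ + ηt) / ((u - ηt) * (μ - ηt)))
    (hk : k = exp (-(6 * π * (u + ηt) / (μ - ηt))))
    (Δ₂ : ℝ) (hΔ₂ : Δ₂ ∈ Set.Ioo (0 : ℝ) 1)
    (Δ₁ : ℝ) (hΔ₁ : Δ₁ = k * Δ₂ ^ c) :
    1 < c ∧ k < 1 ∧ Δ₁ < Δ₂ ∧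
    ∀ ψ ∈ Set.Ioo (-π) π, ∀ γ ∈ Set.Ioo (-π) π, ∀ φ₂ φ₁ : ℝ,
      φ₂ - ψ ≥ (μ + ηt) / (u - ηt) * Real.log Δ₂ →
      φ₁ - γ ≤ (μ - ηt) / (u + ηt) * Real.log Δ₁ →
      φ₂ - φ₁ ≥ 4 * π := by
  have huη : 0 < u - ηt := by have h := lt_min_iff.mp hηt; linarith [h.1]
  have hμη : 0 < μ - ηt := by have h := lt_min_iff.mp hηt; linarith [h.2]
  have hπ : 0 < π := Real.pi_pos
  have hc1 : 1 < c := by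
    rw [hc, lt_div_iff₀ (by positivity)]
    nlinarith
  have hk1 : k < 1 := by
    rw [hk, exp_lt_one_iff]
    have : 0 < 6 * π * (u + ηt) / (μ - ηt) := by positivity
    linarith
  have hk0 : 0 < k := by rw [hk]; exact exp_pos _
  obtain ⟨hΔ0, hΔlt⟩ := hΔ₂
  have hpow : Δ₂ ^ c < Δ₂ := by
    calc Δ₂ ^ c < Δ₂ ^ (1:ℝ) := Real.rpow_lt_rpow_of_exponent_gt hΔ0 hΔlt hc1
      _ = Δ₂ := Real.rpow_one _
  have hΔ₁lt : Δ₁ < Δ₂ := by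
    rw [hΔ₁]
    calc k * Δ₂ ^ c < 1 * Δ₂ ^ c :=
          mul_lt_mul_of_pos_right hk1 (Real.rpow_pos_of_pos hΔ0 _)
      _ = Δ₂ ^ c := one_mul _
      _ < Δ₂ := hpow
  refine ⟨hc1, hk1, hΔ₁lt, ?_⟩
  rintro ψ ⟨hψ1, hψ2⟩ γ ⟨hγ1, hγ2⟩ φ₂ φ₁ h2 h1
  have hlog1 : Real.log Δ₁ = -(6 * π * (u + ηt) / (μ - ηt)) + c * Real.log Δ₂ := by
    rw [hΔ₁, Real.log_mul (ne_of_gt hk0) (ne_of_gt (Real.rpow_pos_of_pos hΔ0 _)),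
      hk, Real.log_exp, Real.log_rpow hΔ0]
  have key : (μ - ηt) / (u + ηt) * Real.log Δ₁
      = -(6*π) + (μ + ηt) / (u - ηt) * Real.log Δ₂ := by
    rw [hlog1, hc]
    field_simp
  rw [key] at h1
  linarith
end
end

section
/- Let α > 0 and 0 < Δ₁ < Δ₂ be reals, R = [−α, α] × [Δ₁, Δ₂] ⊂ ℝ², Φ : R → ℝ continuous, Q : R → ℝ² continuous, and ψ* ∈ ℝ. Assume that for every p ∈ R: if Φ(p) = ψ* − π or Φ(p) = ψ* + π then Q₂(p) < −Δ₂, and if Φ(p) = ψ* then Q₂(p) > Δ₂. Define M₀ = {p ∈ R : ψ* − π < Φ(p) < ψ*} and M₁ = {p ∈ R : ψ* < Φ(p) < ψ* + π}. Then for every continuous curve g : [a,b] → R with Φ(g(a)) ≤ ψ* − π and Φ(g(b)) ≥ ψ* + π there exist a₀ < b₀ < a₁ < b₁ in [a,b] such that: g(t) ∈ M₀ and Q₂(g(t)) ∈ (Δ₁, Δ₂) for all t ∈ (a₀, b₀), with Q₂(g(a₀)) = Δ₁ and Q₂(g(b₀)) = Δ₂; and g(t) ∈ M₁ and Q₂(g(t))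 ∈ (Δ₁, Δ₂) for all t ∈ (a₁, b₁), with Q₂(g(a₁)) = Δ₂ and Q₂(g(b₁)) = Δ₁. -/
noncomputable section
open Real Set

private lemma crossing (f : ℝ → ℝ) (c d : ℝ) (hcd : c ≤ d)
    (hf : ContinuousOn f (Icc c d)) (y₁ y₂ : ℝ) (hy : y₁ < y₂)
    (h1 : f c ≤ y₁) (h2 : y₂ ≤ f d) :
    ∃ r s, r ∈ Icc c d ∧ s ∈ Icc c d ∧ r < s ∧ f r = y₁ ∧ f s = y₂ ∧
      ∀ t ∈ Ioo r s, y₁ < f t ∧ f t < y₂ := by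
  set S : Set ℝ := Icc c d ∩ f ⁻¹' {y₂} with hSdef
  have hSne : S.Nonempty := by
    obtain ⟨t, ht, hft⟩ := intermediate_value_Icc hcd hf ⟨le_trans h1 hy.le, h2⟩
    exact ⟨t, ht, hft⟩
  have hSclosed : IsClosed S :=
    hf.preimage_isClosed_of_isClosed isClosed_Icc isClosed_singleton
  have hSbdd : BddBelow S := (bddBelow_Icc : BddBelow (Icc c d)).mono inter_subset_left
  set s := sInf S with hsdef
  have hsS : s ∈ S := hSclosed.csInf_mem hSne hSbdd
  have hsIcc : s ∈ Icc c d := hsS.1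
  have hfs : f s = y₂ := hsS.2
  have hsmin : ∀ t ∈ S, s ≤ t := fun t ht => csInf_le hSbdd ht
  set T : Set ℝ := Icc c s ∩ f ⁻¹' {y₁} with hTdef
  have hfc : ContinuousOn f (Icc c s) := hf.mono (Icc_subset_Icc le_rfl hsIcc.2)
  have hTne : T.Nonempty := by
    obtain ⟨t, ht, hft⟩ := intermediate_value_Icc hsIcc.1 hfc
      (by rw [hfs]; exact ⟨h1, hy.le⟩)
    exact ⟨t, ht, hft⟩
  have hTclosed : IsClosed T :=
    hfc.preimage_isClosed_of_isClosed isClosed_Icc isClosed_singleton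
  have hTbdd : BddAbove T := (bddAbove_Icc (a := c) (b := s)).mono inter_subset_left
  set r := sSup T with hrdef
  have hrT : r ∈ T := hTclosed.csSup_mem hTne hTbdd
  have hrIcc : r ∈ Icc c s := hrT.1
  have hfr : f r = y₁ := hrT.2
  have hrmax : ∀ t ∈ T, t ≤ r := fun t ht => le_csSup hTbdd ht
  have hrs : r < s := by
    rcases lt_or_eq_of_le hrIcc.2 with h | h
    · exact h
    · exfalso; rw [h, hfs] at hfr; exact absurd hfr hy.ne'
  refine ⟨r, s, ⟨hrIcc.1, le_trans hrIcc.2 hsIcc.2⟩, hsIcc, hrs, hfr, hfs, ?_⟩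
  intro t ht
  constructor
  · by_contra h
    push_neg at h
    obtain ⟨t', ht', hft'⟩ := intermediate_value_Icc ht.2.le
      (hf.mono (Icc_subset_Icc (le_trans hrIcc.1 ht.1.le) hsIcc.2))
      (by rw [hfs]; exact ⟨h, hy.le⟩)
    have : t' ≤ r := hrmax t' ⟨⟨le_trans hrIcc.1 (le_trans ht.1.le ht'.1), ht'.2⟩, hft'⟩
    linarith [ht.1, ht'.1]
  · by_contra h
    push_neg at h
    obtain ⟨t', ht', hft'⟩ := intermediate_value_Icc ht.1.le
      (hf.mono (Icc_subset_Icc hrIcc.1 (le_trans ht.2.le hsIcc.2)))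
      (by rw [hfr]; exact ⟨hy.le, h⟩)
    have : s ≤ t' := hsmin t' ⟨⟨le_trans hrIcc.1 ht'.1,
      le_trans ht'.2 (le_trans ht.2.le hsIcc.2)⟩, hft'⟩
    linarith [ht.2, ht'.2]

theorem statement17
    (α Δ₁ Δ₂ : ℝ) (hα : 0 < α) (hΔ₁ : 0 < Δ₁) (hΔ₁₂ : Δ₁ < Δ₂)
    (Φ : ℝ × ℝ → ℝ) (Q : ℝ × ℝ → ℝ × ℝ)
    (hΦ : ContinuousOn Φ (Icc (-α) α ×ˢ Icc Δ₁ Δ₂))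
    (hQ : ContinuousOn Q (Icc (-α) α ×ˢ Icc Δ₁ Δ₂))
    (ψ : ℝ)
    (hlow : ∀ p ∈ Icc (-α) α ×ˢ Icc Δ₁ Δ₂,
      (Φ p = ψ - π ∨ Φ p = ψ + π) → (Q p).2 < -Δ₂)
    (hhigh : ∀ p ∈ Icc (-α) α ×ˢ Icc Δ₁ Δ₂, Φ p = ψ → (Q p).2 > Δ₂) :
    ∀ a b : ℝ, a ≤ b → ∀ g : ℝ → ℝ × ℝ,
      ContinuousOn g (Icc a b) →
      MapsTo g (Icc a b) (Icc (-α) α ×ˢ Icc Δ₁ Δ₂) →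
      Φ (g a) ≤ ψ - π → Φ (g b) ≥ ψ + π →
      ∃ a₀ b₀ a₁ b₁ : ℝ,
        a₀ ∈ Icc a b ∧ b₀ ∈ Icc a b ∧ a₁ ∈ Icc a b ∧ b₁ ∈ Icc a b ∧
        a₀ < b₀ ∧ b₀ < a₁ ∧ a₁ < b₁ ∧
        (∀ t ∈ Ioo a₀ b₀,
          g t ∈ {p ∈ Icc (-α) α ×ˢ Icc Δ₁ Δ₂ | ψ - π < Φ p ∧ Φ p < ψ} ∧
          (Q (g t)).2 ∈ Ioo Δ₁ Δ₂) ∧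
        (Q (g a₀)).2 = Δ₁ ∧ (Q (g b₀)).2 = Δ₂ ∧
        (∀ t ∈ Ioo a₁ b₁,
          g t ∈ {p ∈ Icc (-α) α ×ˢ Icc Δ₁ Δ₂ | ψ < Φ p ∧ Φ p < ψ + π} ∧
          (Q (g t)).2 ∈ Ioo Δ₁ Δ₂) ∧
        (Q (g a₁)).2 = Δ₂ ∧ (Q (g b₁)).2 = Δ₁ := by
  intro a b hab g hg hmaps hga hgb
  have hπ : (0:ℝ) < π := Real.pi_pos
  set f : ℝ → ℝ := fun t => Φ (g t) with hfdef
  set q : ℝ → ℝ := fun t => (Q (g t)).2 with hqdef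
  have hfcont : ContinuousOn f (Icc a b) := hΦ.comp hg hmaps
  have hqcont : ContinuousOn q (Icc a b) :=
    continuous_snd.comp_continuousOn (hQ.comp hg hmaps)
  -- first region: ψ - π to ψ
  obtain ⟨r, s, hr, hs, hrs, hfr, hfs, hfro⟩ :=
    crossing f a b hab hfcont (ψ - π) ψ (by linarith) hga (by linarith)
  have hqr : q r < -Δ₂ := hlow (g r) (hmaps hr) (Or.inl hfr)
  have hqs : q s > Δ₂ := hhigh (g s) (hmaps hs) hfs
  obtain ⟨a₀, b₀, ha₀, hb₀, hab₀, hqa₀, hqb₀, hq₀⟩ :=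
    crossing q r s hrs.le
      (hqcont.mono (Icc_subset_Icc hr.1 hs.2)) Δ₁ Δ₂ hΔ₁₂
      (by linarith) (by linarith)
  have hra₀ : r < a₀ := by
    rcases lt_or_eq_of_le ha₀.1 with h | h
    · exact h
    · exfalso; rw [← h] at hqa₀; linarith
  have hb₀s : b₀ < s := by
    rcases lt_or_eq_of_le hb₀.2 with h | h
    · exact h
    · exfalso; rw [h] at hqb₀; linarith
  -- second region: ψ to ψ + π
  have hsab : s ∈ Icc a b := hs
  obtain ⟨u, v, hu, hv, huv, hfu, hfv, hfuo⟩ :=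
    crossing f s b hs.2 (hfcont.mono (Icc_subset_Icc hs.1 le_rfl)) ψ (ψ + π)
      (by linarith) (le_of_eq hfs) hgb
  have huab : u ∈ Icc a b := ⟨le_trans hs.1 hu.1, hu.2⟩
  have hvab : v ∈ Icc a b := ⟨le_trans hs.1 hv.1, hv.2⟩
  have hqu : q u > Δ₂ := hhigh (g u) (hmaps huab) hfu
  have hqv : q v < -Δ₂ := hlow (g v) (hmaps hvab) (Or.inr hfv)
  obtain ⟨a₁, b₁, ha₁, hb₁, hab₁, hqa₁, hqb₁, hq₁⟩ :=
    crossing (fun t => -q t) u v huv.le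
      (((hqcont.mono (Icc_subset_Icc huab.1 hvab.2)).neg)) (-Δ₂) (-Δ₁)
      (by linarith) (by simp; linarith) (by simp; linarith)
  have hqa₁' : q a₁ = Δ₂ := by simpa using hqa₁
  have hqb₁' : q b₁ = Δ₁ := by simpa using hqb₁
  have hua₁ : u < a₁ := by
    rcases lt_or_eq_of_le ha₁.1 with h | h
    · exact h
    · exfalso; rw [← h] at hqa₁'; linarith
  have hb₁v : b₁ < v := by
    rcases lt_or_eq_of_le hb₁.2 with h | h
    · exact h
    · exfalso; rw [h] at hqb₁'; linarith
  have ha₀ab : a₀ ∈ Icc a b := ⟨le_trans hr.1 ha₀.1, le_trans ha₀.2 hs.2⟩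
  have hb₀ab : b₀ ∈ Icc a b := ⟨le_trans hr.1 hb₀.1, le_trans hb₀.2 hs.2⟩
  have ha₁ab : a₁ ∈ Icc a b := ⟨le_trans huab.1 ha₁.1, le_trans ha₁.2 hvab.2⟩
  have hb₁ab : b₁ ∈ Icc a b := ⟨le_trans huab.1 hb₁.1, le_trans hb₁.2 hvab.2⟩
  refine ⟨a₀, b₀, a₁, b₁, ha₀ab, hb₀ab, ha₁ab, hb₁ab, hab₀,
    by linarith [hu.1], hab₁, ?_, hqa₀, hqb₀, ?_, hqa₁', hqb₁'⟩
  · intro t ht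
    have htrs : t ∈ Ioo r s := ⟨lt_of_le_of_lt hra₀.le ht.1, lt_of_lt_of_le ht.2 hb₀s.le⟩
    have htab : t ∈ Icc a b := ⟨le_trans hr.1 htrs.1.le, le_trans htrs.2.le hs.2⟩
    exact ⟨⟨hmaps htab, hfro t htrs⟩, hq₀ t ht⟩
  · intro t ht
    have htuv : t ∈ Ioo u v := ⟨lt_of_le_of_lt hua₁.le ht.1, lt_of_lt_of_le ht.2 hb₁v.le⟩
    have htab : t ∈ Icc a b := ⟨le_trans huab.1 htuv.1.le, le_trans htuv.2.le hvab.2⟩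
    obtain ⟨h1, h2⟩ := hq₁ t ht
    exact ⟨⟨hmaps htab, hfuo t htuv⟩, by constructor <;> linarith [h1, h2]⟩
end
end

section
/- Let α > 0 and 0 < Δ₁ < Δ₂ be reals, R = [−α, α] × [Δ₁, Δ₂] ⊂ ℝ², Q : R → ℝ² a continuous map with Q(p) ∈ [−α, α] × ℝ for all p ∈ R, and M₀, M₁ disjoint subsets of R. Assume: (A) for every continuous curve g : [a,b] → R with g₂(a) = Δ₁ and g₂(b) = Δ₂ there exist a₀ < b₀ < a₁ < b₁ in [a,b] such that g(t) ∈ M₀ and Q₂(g(t)) ∈ (Δ₁, Δ₂) for all t ∈ (a₀, b₀), with Q₂(g(a₀)) = Δ₁ and Q₂(g(b₀)) = Δ₂, and g(t) ∈ M₁ and Q₂(g(t)) ∈ (Δ₁, Δ₂) for all t ∈ (a₁, b₁), with Q₂(g(a₁)) = Δ₂ and Q₂(g(b₁)) = Δ₁; (B) for each i ∈ {0,1}, every point p of the closure of M_i with Δ₁ ≤ Q₂(p) ≤ Δ₂ belongs to M_i. Then for every sequence (s_n)_{n≥0} in {0,1} there exists a sequence (x_n)_{n≥0} in R with x_{n+1}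 = Q(x_n), x_n ∈ M_{s_n}, and Δ₁ ≤ Q₂(x_n) ≤ Δ₂ for all integers n ≥ 0. -/
noncomputable section
open Real Set

private lemma step_lemma18
    (α Δ₁ Δ₂ : ℝ) (hΔ₁₂ : Δ₁ < Δ₂)
    (Q : ℝ × ℝ → ℝ × ℝ)
    (hQ : ContinuousOn Q (Icc (-α) α ×ˢ Icc Δ₁ Δ₂))
    (hQrange : ∀ p ∈ Icc (-α) α ×ˢ Icc Δ₁ Δ₂, (Q p).1 ∈ Icc (-α) α)
    (Mi : Set (ℝ × ℝ)) (hMiR : Mi ⊆ Icc (-α) α ×ˢ Icc Δ₁ Δ₂)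
    (hBi : ∀ p ∈ closure Mi, Δ₁ ≤ (Q p).2 → (Q p).2 ≤ Δ₂ → p ∈ Mi)
    (n : ℕ) (a b : ℝ) (hab : a ≤ b) (p : ℝ → ℝ × ℝ)
    (hp : ContinuousOn p (Icc a b))
    (hpR : MapsTo p (Icc a b) (Icc (-α) α ×ˢ Icc Δ₁ Δ₂))
    (hn : ContinuousOn (fun t => Q^[n] (p t)) (Icc a b))
    (hnR : MapsTo (fun t => Q^[n] (p t)) (Icc a b) (Icc (-α) α ×ˢ Icc Δ₁ Δ₂))
    (c d : ℝ) (hc : c ∈ Icc a b) (hd : d ∈ Icc a b) (hcd : c < d)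
    (hint : ∀ t ∈ Ioo c d, Q^[n] (p t) ∈ Mi ∧ (Q (Q^[n] (p t))).2 ∈ Ioo Δ₁ Δ₂)
    (hend : ((Q (Q^[n] (p c))).2 = Δ₁ ∧ (Q (Q^[n] (p d))).2 = Δ₂) ∨
            ((Q (Q^[n] (p c))).2 = Δ₂ ∧ (Q (Q^[n] (p d))).2 = Δ₁)) :
    ∃ c' d' : ℝ, c' ≤ d' ∧ ∃ q : ℝ → ℝ × ℝ,
      ContinuousOn q (Icc c' d') ∧
      MapsTo q (Icc c' d') (Icc (-α) α ×ˢ Icc Δ₁ Δ₂) ∧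
      ContinuousOn (fun t => Q^[n+1] (q t)) (Icc c' d') ∧
      MapsTo (fun t => Q^[n+1] (q t)) (Icc c' d') (Icc (-α) α ×ˢ Icc Δ₁ Δ₂) ∧
      (Q^[n+1] (q c')).2 = Δ₁ ∧ (Q^[n+1] (q d')).2 = Δ₂ ∧
      (∀ t ∈ Icc c' d', q t ∈ p '' Icc a b) ∧
      (∀ t ∈ Icc c' d', Q^[n] (q t) ∈ Mi ∧ (Q (Q^[n] (q t))).2 ∈ Icc Δ₁ Δ₂) := by
  have hsub : Icc c d ⊆ Icc a b := Icc_subset_Icc hc.1 hd.2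
  have hQ2c : (Q (Q^[n] (p c))).2 ∈ Icc Δ₁ Δ₂ := by
    rcases hend with ⟨h1, _⟩ | ⟨h1, _⟩ <;> rw [h1] <;> exact ⟨by linarith, by linarith⟩
  have hQ2d : (Q (Q^[n] (p d))).2 ∈ Icc Δ₁ Δ₂ := by
    rcases hend with ⟨_, h1⟩ | ⟨_, h1⟩ <;> rw [h1] <;> exact ⟨by linarith, by linarith⟩
  -- endpoints belong to Mi via closure and hBi
  have hcl : ∀ e, e ∈ Icc a b → e ∈ closure (Ioo c d) →
      (Q (Q^[n] (p e))).2 ∈ Icc Δ₁ Δ₂ → Q^[n] (p e) ∈ Mi := by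
    intro e heab hecl hQ2
    have hcw : ContinuousWithinAt (fun t => Q^[n] (p t)) (Ioo c d) e :=
      (hn e heab).mono (Ioo_subset_Icc_self.trans hsub)
    have h1 : Q^[n] (p e) ∈ closure ((fun t => Q^[n] (p t)) '' Ioo c d) :=
      hcw.mem_closure_image hecl
    have h2 : Q^[n] (p e) ∈ closure Mi :=
      closure_mono (image_subset_iff.mpr fun t ht => (hint t ht).1) h1
    exact hBi _ h2 hQ2.1 hQ2.2
  have hclIoo : closure (Ioo c d) = Icc c d := closure_Ioo hcd.ne
  have key : ∀ t ∈ Icc c d, Q^[n] (p t) ∈ Mi ∧ (Q (Q^[n] (p t))).2 ∈ Icc Δ₁ Δ₂ := by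
    intro t ht
    rcases eq_or_lt_of_le ht.1 with heq | h1
    · rw [← heq]
      exact ⟨hcl c hc (by rw [hclIoo]; exact left_mem_Icc.mpr hcd.le) hQ2c, hQ2c⟩
    rcases eq_or_lt_of_le ht.2 with heq | h2
    · rw [heq]
      exact ⟨hcl d hd (by rw [hclIoo]; exact right_mem_Icc.mpr hcd.le) hQ2d, hQ2d⟩
    · exact ⟨(hint t ⟨h1, h2⟩).1, Ioo_subset_Icc_self (hint t ⟨h1, h2⟩).2⟩
  -- continuity and range of level n+1 on [c,d]
  have hn1 : ContinuousOn (fun t => Q^[n+1] (p t)) (Icc c d) := by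
    simp only [Function.iterate_succ_apply']
    exact hQ.comp (hn.mono hsub) (fun t ht => hnR (hsub ht))
  have hn1R : MapsTo (fun t => Q^[n+1] (p t)) (Icc c d) (Icc (-α) α ×ˢ Icc Δ₁ Δ₂) := by
    intro t ht
    show Q^[n+1] (p t) ∈ _
    rw [Function.iterate_succ_apply']
    exact ⟨hQrange _ (hnR (hsub ht)), (key t ht).2⟩
  rcases hend with ⟨he1, he2⟩ | ⟨he1, he2⟩
  · refine ⟨c, d, hcd.le, p, hp.mono hsub, fun t ht => hpR (hsub ht), hn1, hn1R, ?_, ?_, ?_, key⟩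
    · rw [Function.iterate_succ_apply']; exact he1
    · rw [Function.iterate_succ_apply']; exact he2
    · exact fun t ht => ⟨t, hsub ht, rfl⟩
  · -- reverse the parametrization
    have hσ : ∀ t ∈ Icc c d, c + d - t ∈ Icc c d := by
      intro t ht; exact ⟨by linarith [ht.2], by linarith [ht.1]⟩
    have hσc : Continuous (fun t : ℝ => c + d - t) := continuous_const.sub continuous_id
    refine ⟨c, d, hcd.le, fun t => p (c + d - t), ?_, ?_, ?_, ?_, ?_, ?_, ?_, ?_⟩
    · exact (hp.mono hsub).comp hσc.continuousOn (fun t ht => hσ t ht)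
    · exact fun t ht => hpR (hsub (hσ t ht))
    · exact hn1.comp hσc.continuousOn (fun t ht => hσ t ht)
    · exact fun t ht => hn1R (hσ t ht)
    · show (Q^[n + 1] (p (c + d - c))).2 = Δ₁
      have : c + d - c = d := by ring
      rw [this, Function.iterate_succ_apply']; exact he2
    · show (Q^[n + 1] (p (c + d - d))).2 = Δ₂
      have : c + d - d = c := by ring
      rw [this, Function.iterate_succ_apply']; exact he1
    · exact fun t ht => ⟨c + d - t, hsub (hσ t ht), rfl⟩
    · exact fun t ht => key _ (hσ t ht)

theorem statement18
    (α Δ₁ Δ₂ : ℝ) (hα : 0 < α) (hΔ₁ : 0 < Δ₁) (hΔ₁₂ : Δ₁ < Δ₂)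
    (Q : ℝ × ℝ → ℝ × ℝ)
    (hQ : ContinuousOn Q (Icc (-α) α ×ˢ Icc Δ₁ Δ₂))
    (hQrange : ∀ p ∈ Icc (-α) α ×ˢ Icc Δ₁ Δ₂, (Q p).1 ∈ Icc (-α) α)
    (M : Fin 2 → Set (ℝ × ℝ))
    (hMR : ∀ i, M i ⊆ Icc (-α) α ×ˢ Icc Δ₁ Δ₂)
    (hdisj : Disjoint (M 0) (M 1))
    (hA : ∀ a b : ℝ, a ≤ b → ∀ g : ℝ → ℝ × ℝ,
      ContinuousOn g (Icc a b) →
      MapsTo g (Icc a b) (Icc (-α) α ×ˢ Icc Δ₁ Δ₂) →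
      (g a).2 = Δ₁ → (g b).2 = Δ₂ →
      ∃ a₀ b₀ a₁ b₁ : ℝ,
        a₀ ∈ Icc a b ∧ b₀ ∈ Icc a b ∧ a₁ ∈ Icc a b ∧ b₁ ∈ Icc a b ∧
        a₀ < b₀ ∧ b₀ < a₁ ∧ a₁ < b₁ ∧
        (∀ t ∈ Ioo a₀ b₀, g t ∈ M 0 ∧ (Q (g t)).2 ∈ Ioo Δ₁ Δ₂) ∧
        (Q (g a₀)).2 = Δ₁ ∧ (Q (g b₀)).2 = Δ₂ ∧
        (∀ t ∈ Ioo a₁ b₁, g t ∈ M 1 ∧ (Q (g t)).2 ∈ Ioo Δ₁ Δ₂) ∧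
        (Q (g a₁)).2 = Δ₂ ∧ (Q (g b₁)).2 = Δ₁)
    (hB : ∀ i : Fin 2, ∀ p ∈ closure (M i),
      Δ₁ ≤ (Q p).2 → (Q p).2 ≤ Δ₂ → p ∈ M i) :
    ∀ s : ℕ → Fin 2, ∃ x : ℕ → ℝ × ℝ,
      (∀ n, x n ∈ Icc (-α) α ×ˢ Icc Δ₁ Δ₂) ∧
      (∀ n, x (n + 1) = Q (x n)) ∧
      (∀ n, x n ∈ M (s n)) ∧
      (∀ n, Δ₁ ≤ (Q (x n)).2 ∧ (Q (x n)).2 ≤ Δ₂) := by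
  intro s
  set R : Set (ℝ × ℝ) := Icc (-α) α ×ˢ Icc Δ₁ Δ₂ with hR
  have hRclosed : IsClosed R := isClosed_Icc.prod isClosed_Icc
  have hclMR : ∀ i, closure (M i) ⊆ R := fun i => closure_minimal (hMR i) hRclosed
  -- main induction: curves whose prefix-trajectories realize the symbol sequence
  have inv : ∀ n : ℕ, ∃ a b : ℝ, a ≤ b ∧ ∃ p : ℝ → ℝ × ℝ,
      ContinuousOn p (Icc a b) ∧ MapsTo p (Icc a b) R ∧
      ContinuousOn (fun t => Q^[n] (p t)) (Icc a b) ∧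
      MapsTo (fun t => Q^[n] (p t)) (Icc a b) R ∧
      (Q^[n] (p a)).2 = Δ₁ ∧ (Q^[n] (p b)).2 = Δ₂ ∧
      ∀ t ∈ Icc a b, ∀ k, k < n →
        Q^[k] (p t) ∈ M (s k) ∧ (Q (Q^[k] (p t))).2 ∈ Icc Δ₁ Δ₂ := by
    intro n
    induction n with
    | zero =>
      refine ⟨Δ₁, Δ₂, hΔ₁₂.le, fun t => ((0 : ℝ), t), ?_, ?_, ?_, ?_, rfl, rfl, ?_⟩
      · exact (continuous_const.prodMk continuous_id).continuousOn
      · intro t ht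
        refine ⟨?_, ht⟩
        show (0:ℝ) ∈ Icc (-α) α
        exact ⟨by linarith, hα.le⟩
      · simp only [Function.iterate_zero, id_eq]
        exact (continuous_const.prodMk continuous_id).continuousOn
      · simp only [Function.iterate_zero, id_eq]
        intro t ht
        refine ⟨?_, ht⟩
        show (0:ℝ) ∈ Icc (-α) α
        exact ⟨by linarith, hα.le⟩
      · intro t _ k hk; exact absurd hk (Nat.not_lt_zero k)
    | succ n ih =>
      obtain ⟨a, b, hab, p, hp, hpR, hn, hnR, ha, hb, hhist⟩ := ih
      obtain ⟨a₀, b₀, a₁, b₁, ha₀, hb₀, ha₁, hb₁, h01, h02, h03, hI0, hQa₀, hQb₀, hI1, hQa₁, hQb₁⟩ :=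
        hA a b hab (fun t => Q^[n] (p t)) hn hnR ha hb
      have h2 : s n = 0 ∨ s n = 1 := by omega
      rcases h2 with h2 | h2
      · obtain ⟨c', d', hcd', q, hq, hqR, hq1, hq1R, hqa, hqb, himg, hkey⟩ :=
          step_lemma18 α Δ₁ Δ₂ hΔ₁₂ Q hQ hQrange (M (s n)) (hMR _) (hB (s n)) n a b hab p
            hp hpR hn hnR a₀ b₀ ha₀ hb₀ h01
            (by rw [h2]; exact fun t ht => hI0 t ht) (Or.inl ⟨hQa₀, hQb₀⟩)
        refine ⟨c', d', hcd', q, hq, hqR, hq1, hq1R, hqa, hqb, ?_⟩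
        intro t ht k hk
        rcases Nat.lt_succ_iff_lt_or_eq.mp hk with hk | rfl
        · obtain ⟨t', ht', hq'⟩ := himg t ht
          rw [← hq']; exact hhist t' ht' k hk
        · exact hkey t ht
      · obtain ⟨c', d', hcd', q, hq, hqR, hq1, hq1R, hqa, hqb, himg, hkey⟩ :=
          step_lemma18 α Δ₁ Δ₂ hΔ₁₂ Q hQ hQrange (M (s n)) (hMR _) (hB (s n)) n a b hab p
            hp hpR hn hnR a₁ b₁ ha₁ hb₁ h03
            (by rw [h2]; exact fun t ht => hI1 t ht) (Or.inr ⟨hQa₁, hQb₁⟩)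
        refine ⟨c', d', hcd', q, hq, hqR, hq1, hq1R, hqa, hqb, ?_⟩
        intro t ht k hk
        rcases Nat.lt_succ_iff_lt_or_eq.mp hk with hk | rfl
        · obtain ⟨t', ht', hq'⟩ := himg t ht
          rw [← hq']; exact hhist t' ht' k hk
        · exact hkey t ht
  -- the nested closed sets
  set D : ℕ → Set (ℝ × ℝ) := fun n =>
    {x | x ∈ R ∧ ∀ k, k < n →
      Q^[k] x ∈ closure (M (s k)) ∧ (Q (Q^[k] x)).2 ∈ Icc Δ₁ Δ₂} with hD
  have hD0 : D 0 = R := by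
    ext x; simp [hD]
  have hDsucc : ∀ n, D (n + 1) = D n ∩
      Q^[n] ⁻¹' (closure (M (s n)) ∩ {y | (Q y).2 ∈ Icc Δ₁ Δ₂}) := by
    intro n
    ext x
    constructor
    · intro hx
      exact ⟨⟨hx.1, fun k hk => hx.2 k (hk.trans (Nat.lt_succ_self n))⟩,
        (hx.2 n (Nat.lt_succ_self n)).1, (hx.2 n (Nat.lt_succ_self n)).2⟩
    · rintro ⟨⟨hxR, hxk⟩, hxn⟩
      refine ⟨hxR, fun k hk => ?_⟩
      rcases Nat.lt_succ_iff_lt_or_eq.mp hk with hk | rfl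
      · exact hxk k hk
      · exact ⟨hxn.1, hxn.2⟩
  have hDcc : ∀ n, IsClosed (D n) ∧ ContinuousOn (Q^[n]) (D n) := by
    intro n
    induction n with
    | zero =>
      rw [hD0]
      exact ⟨hRclosed, by simp only [Function.iterate_zero]; exact continuous_id.continuousOn⟩
    | succ n ih =>
      have hT : IsClosed (closure (M (s n)) ∩ {y | (Q y).2 ∈ Icc Δ₁ Δ₂}) := by
        have : ContinuousOn (fun y => (Q y).2) (closure (M (s n))) :=
          continuous_snd.comp_continuousOn (hQ.mono (hclMR _))
        exact this.preimage_isClosed_of_isClosed isClosed_closure isClosed_Icc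
      have hDc : IsClosed (D (n + 1)) := by
        rw [hDsucc n]
        exact ih.2.preimage_isClosed_of_isClosed ih.1 hT
      refine ⟨hDc, ?_⟩
      have hmaps : MapsTo (Q^[n]) (D (n + 1)) R := by
        intro x hx
        exact hclMR _ (hx.2 n (Nat.lt_succ_self n)).1
      have : ContinuousOn (Q ∘ Q^[n]) (D (n + 1)) :=
        hQ.comp (ih.2.mono (by rw [hDsucc n]; exact inter_subset_left)) hmaps
      rwa [Function.iterate_succ'] 
  have hDne : ∀ n, (D n).Nonempty := by
    intro n
    obtain ⟨a, b, hab, p, _, hpR, _, _, _, _, hhist⟩ := inv n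
    refine ⟨p a, hpR (left_mem_Icc.mpr hab), fun k hk => ?_⟩
    exact ⟨subset_closure (hhist a (left_mem_Icc.mpr hab) k hk).1,
      (hhist a (left_mem_Icc.mpr hab) k hk).2⟩
  have hDanti : ∀ n, D (n + 1) ⊆ D n := by
    intro n x hx
    exact ⟨hx.1, fun k hk => hx.2 k (hk.trans (Nat.lt_succ_self n))⟩
  have hDcomp : IsCompact (D 0) := by
    rw [hD0]; exact (isCompact_Icc.prod isCompact_Icc)
  obtain ⟨x₀, hx₀⟩ := IsCompact.nonempty_iInter_of_sequence_nonempty_isCompact_isClosed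
    D hDanti hDne hDcomp (fun n => (hDcc n).1)
  have hmem : ∀ n, Q^[n] x₀ ∈ M (s n) ∧ (Q (Q^[n] x₀)).2 ∈ Icc Δ₁ Δ₂ := by
    intro n
    have h := (mem_iInter.mp hx₀ (n + 1)).2 n (Nat.lt_succ_self n)
    exact ⟨hB (s n) _ h.1 h.2.1 h.2.2, h.2⟩
  refine ⟨fun n => Q^[n] x₀, fun n => hMR _ (hmem n).1,
    fun n => Function.iterate_succ_apply' Q n x₀, fun n => (hmem n).1,
    fun n => ⟨(hmem n).2.1, (hmem n).2.2⟩⟩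
end
end

section
/- Let α > 0 and 0 < Δ₁ < Δ₂ be reals, R = [−α, α] × [Δ₁, Δ₂] ⊂ ℝ², Q : R → ℝ² a continuous map, and M₀, M₁ disjoint subsets of R. Assume: (i) for every sequence (σ_n)_{n≥0} in {0,1} there exists a sequence (y_n)_{n≥0} in R with y_{n+1} = Q(y_n), y_n ∈ M_{σ_n}, and Δ₁ ≤ Q₂(y_n) ≤ Δ₂ for all n ≥ 0; (ii) for each i ∈ {0,1}, every point p of the closure of M_i with Δ₁ ≤ Q₂(p) ≤ Δ₂ belongs to M_i. Then for every bi-infinite sequence (s_n)_{n∈ℤ} in {0,1} there exists a bi-infinite sequence (y_n)_{n∈ℤ} in R with y_{n+1} = Q(y_n) and y_n ∈ M_{s_n} for all integers n. -/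
noncomputable section
open Real Set Filter Topology

theorem statement19
    (α Δ₁ Δ₂ : ℝ) (hα : 0 < α) (hΔ₁ : 0 < Δ₁) (hΔ₁₂ : Δ₁ < Δ₂)
    (Q : ℝ × ℝ → ℝ × ℝ)
    (hQ : ContinuousOn Q (Icc (-α) α ×ˢ Icc Δ₁ Δ₂))
    (M : Fin 2 → Set (ℝ × ℝ))
    (hMR : ∀ i, M i ⊆ Icc (-α) α ×ˢ Icc Δ₁ Δ₂)
    (hdisj : Disjoint (M 0) (M 1))
    (hforward : ∀ σs : ℕ → Fin 2, ∃ y : ℕ → ℝ × ℝ,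
      (∀ n, y n ∈ Icc (-α) α ×ˢ Icc Δ₁ Δ₂) ∧
      (∀ n, y (n + 1) = Q (y n)) ∧
      (∀ n, y n ∈ M (σs n)) ∧
      (∀ n, Δ₁ ≤ (Q (y n)).2 ∧ (Q (y n)).2 ≤ Δ₂))
    (hB : ∀ i : Fin 2, ∀ p ∈ closure (M i),
      Δ₁ ≤ (Q p).2 → (Q p).2 ≤ Δ₂ → p ∈ M i) :
    ∀ s : ℤ → Fin 2, ∃ y : ℤ → ℝ × ℝ,
      (∀ n, y n ∈ Icc (-α) α ×ˢ Icc Δ₁ Δ₂) ∧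
      (∀ n, y (n + 1) = Q (y n)) ∧
      (∀ n, y n ∈ M (s n)) := by
  intro s
  set R : Set (ℝ × ℝ) := Icc (-α) α ×ˢ Icc Δ₁ Δ₂ with hRdef
  -- forward trajectories shifted to start at time -k
  have key : ∀ k : ℕ, ∃ z : ℤ → ℝ × ℝ,
      (∀ n, z n ∈ R) ∧
      (∀ n : ℤ, -(k : ℤ) ≤ n → z (n + 1) = Q (z n) ∧ z n ∈ M (s n)) := by
    intro k
    obtain ⟨y, hy1, hy2, hy3, _⟩ := hforward (fun m => s ((m : ℤ) - k))
    refine ⟨fun n => y (n + k).toNat, fun n => hy1 _, fun n hn => ?_⟩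
    have h1 : (n + 1 + k).toNat = (n + k).toNat + 1 := by omega
    constructor
    · simp only [h1]; exact hy2 _
    · have h3 := hy3 (n + k).toNat
      have h2 : (((n + k).toNat : ℤ) - k) = n := by omega
      rwa [h2] at h3
  choose z hzR hz using key
  have hRcomp : IsCompact R := isCompact_Icc.prod isCompact_Icc
  have hKcomp : IsCompact (Set.pi univ fun _ : ℤ => R) :=
    isCompact_univ_pi fun _ => hRcomp
  have hle : map z atTop ≤ 𝓟 (Set.pi univ fun _ : ℤ => R) := by
    rw [le_principal_iff, mem_map]
    filter_upwards with k
    exact fun n _ => hzR k n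
  obtain ⟨y, hyK, hy⟩ := hKcomp.exists_clusterPt hle
  have mem_closed : ∀ C : Set (ℤ → ℝ × ℝ), IsClosed C →
      (∀ᶠ k in atTop, z k ∈ C) → y ∈ C := by
    intro C hC hev
    have h1 : ClusterPt y (𝓟 C) := hy.mono (le_principal_iff.mpr (mem_map.mpr hev))
    exact hC.closure_eq ▸ mem_closure_iff_clusterPt.mpr h1
  have hyR : ∀ n : ℤ, y n ∈ R := fun n => hyK n (mem_univ n)
  have hstep : ∀ n : ℤ, Q (y n) = y (n + 1) := by
    intro n
    have hA : IsClosed {w : ℤ → ℝ × ℝ | w n ∈ R} :=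
      hRcomp.isClosed.preimage (continuous_apply n)
    have hG : ContinuousOn (fun w : ℤ → ℝ × ℝ => Q (w n) - w (n + 1))
        {w : ℤ → ℝ × ℝ | w n ∈ R} :=
      ((ContinuousOn.comp (f := fun w : ℤ → ℝ × ℝ => w n) hQ
        (continuous_apply n).continuousOn fun w hw => hw).sub
        (continuous_apply (n + 1)).continuousOn)
    have hC : IsClosed ({w : ℤ → ℝ × ℝ | w n ∈ R} ∩
        (fun w : ℤ → ℝ × ℝ => Q (w n) - w (n + 1)) ⁻¹' {0}) :=
      hG.preimage_isClosed_of_isClosed hA isClosed_singleton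
    have hmem := mem_closed _ hC ?_
    · have h2 := hmem.2
      simp only [mem_preimage, mem_singleton_iff, sub_eq_zero] at h2
      exact h2
    · filter_upwards [eventually_ge_atTop (-n).toNat] with k hk
      refine ⟨hzR k n, ?_⟩
      have h1 := (hz k n (by omega)).1
      simp only [mem_preimage, mem_singleton_iff, sub_eq_zero]
      exact h1.symm
  have hMem : ∀ n : ℤ, y n ∈ M (s n) := by
    intro n
    have hC : IsClosed {w : ℤ → ℝ × ℝ | w n ∈ closure (M (s n))} :=
      isClosed_closure.preimage (continuous_apply n)
    have hcl : y n ∈ closure (M (s n)) := by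
      refine mem_closed _ hC ?_
      filter_upwards [eventually_ge_atTop (-n).toNat] with k hk
      exact subset_closure (hz k n (by omega)).2
    have hQy : Q (y n) ∈ R := (hstep n) ▸ hyR (n + 1)
    exact hB (s n) (y n) hcl hQy.2.1 hQy.2.2
  exact ⟨y, hyR, fun n => (hstep n).symm, hMem⟩
end
end
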